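/- Let f₁ and f₂ be nonconstant maps in C(Σ, M) that are not in the same ℂ*-orbit, i.e. there is no nonzero a ∈ ℂ with f₂ = f₁ ∘ g_a. Then there exist ε₁ > 0 and ε₂ > 0 such that for every h ∈ C(Σ, M) with d(h, f₁) < ε₁ and every nonzero a ∈ ℂ, one has d(h ∘ g_a, f₂) ≥ ε₂; that is, the saturation G·U_{ε₁}(f₁) of the ε₁-neighborhood of f₁ does not meet the ε₂-neighborhood of f₂. -/

import Mathlib

open OnePoint

/-- The reparametrization `g_a : Σ → Σ` of the Riemann sphere `Σ = OnePoint ℂ`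
extending `z ↦ a · z` on `ℂ` and fixing the point at infinity. -/
noncomputable def gA (a : ℂ) (ha : a ≠ 0) : C(OnePoint ℂ, OnePoint ℂ) where
  toFun := OnePoint.map (fun z => a * z)
  continuous_toFun := (Homeomorph.onePointCongr (Homeomorph.mulLeft₀ a ha)).continuous

open Filter Topology

lemma gA_infty (a : ℂ) (ha : a ≠ 0) : gA a ha ∞ = ∞ := rfl

lemma gA_coe (a : ℂ) (ha : a ≠ 0) (z : ℂ) : gA a ha (z : OnePoint ℂ) = ((a * z : ℂ) : OnePoint ℂ) := rfl

/-- A sequence of natural numbers tends to `∞` in the Riemann sphere. -/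
lemma tendsto_natCast_infty :
    Tendsto (fun n : ℕ => ((n : ℂ) : OnePoint ℂ)) atTop (𝓝 (∞ : OnePoint ℂ)) := by
  apply OnePoint.tendsto_coe_infty.comp
  rw [Filter.coclosedCompact_eq_cocompact, ← Metric.cobounded_eq_cocompact,
    ← tendsto_norm_atTop_iff_cobounded]
  simpa using tendsto_natCast_atTop_atTop (R := ℝ)

lemma key {M : Type*} [MetricSpace M] [CompactSpace M]
    (f₁ f₂ : C(OnePoint ℂ, M)) (hf₂ : ∃ x y, f₂ x ≠ f₂ y)
    (horb : ¬ ∃ (a : ℂ) (ha : a ≠ 0), f₂ = f₁.comp (gA a ha)) :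
    ∃ ε > 0, ∀ (a : ℂ) (ha : a ≠ 0), ε ≤ dist (f₁.comp (gA a ha)) f₂ := by
  by_contra hcon
  push_neg at hcon
  -- extract a sequence
  have hseq : ∀ n : ℕ, ∃ a : ℂ, ∃ _ : a ≠ 0,
      dist (f₁.comp (gA a (by assumption))) f₂ < 1 / (n + 1) := by
    intro n
    obtain ⟨a, ha, hd⟩ := hcon (1 / (n + 1)) (by positivity)
    exact ⟨a, ha, hd⟩
  choose a ha hd using hseq
  -- pointwise convergence along atTop
  have hpt : ∀ p : OnePoint ℂ,
      Tendsto (fun n => f₁ (gA (a n) (ha n) p)) atTop (𝓝 (f₂ p)) := by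
    intro p
    rw [tendsto_iff_dist_tendsto_zero]
    apply squeeze_zero (fun n => dist_nonneg)
      (fun n => le_of_lt (lt_of_le_of_lt (le_trans (le_of_eq rfl)
        (ContinuousMap.dist_apply_le_dist (f := f₁.comp (gA (a n) (ha n))) (g := f₂) p)) (hd n)))
    exact tendsto_one_div_add_atTop_nhds_zero_nat
  -- pass to an ultrafilter and get a limit in the compact sphere
  set U : Ultrafilter ℕ := Ultrafilter.of atTop with hU
  have hUle : (U : Filter ℕ) ≤ atTop := Ultrafilter.of_le _
  obtain ⟨x, -, hx⟩ := isCompact_univ.ultrafilter_le_nhds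
    (U.map fun n => ((a n : ℂ) : OnePoint ℂ)) (by simp)
  have hx' : Tendsto (fun n => ((a n : ℂ) : OnePoint ℂ)) (U : Filter ℕ) (𝓝 x) := hx
  have hptU : ∀ p : OnePoint ℂ,
      Tendsto (fun n => f₁ (gA (a n) (ha n) p)) (U : Filter ℕ) (𝓝 (f₂ p)) :=
    fun p => (hpt p).mono_left hUle
  have hinf : f₂ ∞ = f₁ ∞ := by
    have h1 : Tendsto (fun n => f₁ (gA (a n) (ha n) ∞)) (U : Filter ℕ) (𝓝 (f₁ ∞)) := by
      simp only [gA_infty]; exact tendsto_const_nhds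
    exact tendsto_nhds_unique (hptU ∞) h1
  obtain ⟨p, q, hpq⟩ := hf₂
  cases x with
  | infty =>
    -- a n → ∞ : f₂ is constant
    have hz : ∀ z : ℂ, z ≠ 0 → f₂ z = f₁ ∞ := by
      intro z hz0
      have hmul : Tendsto (fun n => ((a n * z : ℂ) : OnePoint ℂ)) (U : Filter ℕ) (𝓝 ∞) := by
        have := ((Homeomorph.onePointCongr (Homeomorph.mulRight₀ z hz0)).continuous.tendsto
          ∞).comp hx'
        simpa [Function.comp_def] using this
      have h1 : Tendsto (fun n => f₁ (gA (a n) (ha n) (z : OnePoint ℂ))) (U : Filter ℕ)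
          (𝓝 (f₁ ∞)) := by
        simp only [gA_coe]
        exact (f₁.continuous.tendsto _).comp hmul
      exact tendsto_nhds_unique (hptU z) h1
    have hzero : f₂ ((0 : ℂ) : OnePoint ℂ) = f₁ ∞ := by
      have hs : Tendsto (fun n : ℕ => (((1 / (n + 1) : ℝ) : ℂ) : OnePoint ℂ)) atTop
          (𝓝 ((0 : ℂ) : OnePoint ℂ)) := by
        apply (OnePoint.continuous_coe.tendsto _).comp
        have : Tendsto (fun n : ℕ => ((1 / (n + 1) : ℝ) : ℂ)) atTop (𝓝 ((0 : ℝ) : ℂ)) :=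
          (Complex.continuous_ofReal.tendsto _).comp tendsto_one_div_add_atTop_nhds_zero_nat
        simpa using this
      have h2 : Tendsto (fun n : ℕ => f₂ (((1 / (n + 1) : ℝ) : ℂ) : OnePoint ℂ)) atTop
          (𝓝 (f₂ ((0 : ℂ) : OnePoint ℂ))) := (f₂.continuous.tendsto _).comp hs
      have h3 : ∀ n : ℕ, f₂ ((((1 / (n + 1) : ℝ) : ℂ)) : OnePoint ℂ) = f₁ ∞ := by
        intro n
        apply hz
        simp only [ne_eq, Complex.ofReal_eq_zero]
        positivity
      rw [funext h3] at h2
      exact (tendsto_nhds_unique tendsto_const_nhds h2).symm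
    have hall : ∀ r : OnePoint ℂ, f₂ r = f₁ ∞ := by
      intro r
      cases r with
      | infty => exact hinf
      | coe w =>
        by_cases hw : w = 0
        · subst hw; exact hzero
        · exact hz w hw
    exact hpq (by rw [hall p, hall q])
  | coe b =>
    have hb : Tendsto a (U : Filter ℕ) (𝓝 b) := by
      rw [OnePoint.isOpenEmbedding_coe.isEmbedding.tendsto_nhds_iff]
      exact hx'
    have hz : ∀ z : ℂ, f₂ (z : OnePoint ℂ) = f₁ ((b * z : ℂ) : OnePoint ℂ) := by
      intro z
      have hmul : Tendsto (fun n => ((a n * z : ℂ) : OnePoint ℂ)) (U : Filter ℕ)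
          (𝓝 ((b * z : ℂ) : OnePoint ℂ)) := by
        apply (OnePoint.continuous_coe.tendsto _).comp
        exact hb.mul_const z
      have h1 : Tendsto (fun n => f₁ (gA (a n) (ha n) (z : OnePoint ℂ))) (U : Filter ℕ)
          (𝓝 (f₁ ((b * z : ℂ) : OnePoint ℂ))) := by
        simp only [gA_coe]
        exact (f₁.continuous.tendsto _).comp hmul
      exact tendsto_nhds_unique (hptU z) h1
    by_cases hb0 : b = 0
    · -- f₂ is constant
      subst hb0
      have hzc : ∀ z : ℂ, f₂ (z : OnePoint ℂ) = f₁ ((0 : ℂ) : OnePoint ℂ) := by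
        intro z; rw [hz z]; norm_num
      have hinfc : f₂ ∞ = f₁ ((0 : ℂ) : OnePoint ℂ) := by
        have h2 : Tendsto (fun n : ℕ => f₂ ((n : ℂ) : OnePoint ℂ)) atTop (𝓝 (f₂ ∞)) :=
          (f₂.continuous.tendsto _).comp tendsto_natCast_infty
        simp only [hzc] at h2
        exact (tendsto_nhds_unique tendsto_const_nhds h2).symm
      have hall : ∀ r : OnePoint ℂ, f₂ r = f₁ ((0 : ℂ) : OnePoint ℂ) := by
        intro r
        cases r with
        | infty => exact hinfc
        | coe w => exact hzc w
      exact hpq (by rw [hall p, hall q])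
    · apply horb
      refine ⟨b, hb0, ?_⟩
      ext r
      cases r with
      | infty => simpa [gA_infty] using hinf
      | coe w => simpa [gA_coe] using hz w

/-- For nonconstant maps `f₁, f₂` not in the same `ℂ*`-orbit, the saturation of a small
neighbourhood of `f₁` stays at distance `≥ ε₂` from `f₂`. -/
theorem saturation_misses_neighbourhood {M : Type*} [MetricSpace M] [CompactSpace M]
    (f₁ f₂ : C(OnePoint ℂ, M))
    (hf₁ : ∃ x y, f₁ x ≠ f₁ y) (hf₂ : ∃ x y, f₂ x ≠ f₂ y)
    (horb : ¬ ∃ (a : ℂ) (ha : a ≠ 0), f₂ = f₁.comp (gA a ha)) :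
    ∃ ε₁ > 0, ∃ ε₂ > 0,
      ∀ h : C(OnePoint ℂ, M), dist h f₁ < ε₁ →
        ∀ (a : ℂ) (ha : a ≠ 0), ε₂ ≤ dist (h.comp (gA a ha)) f₂ := by
  obtain ⟨ε, hε, hkey⟩ := key f₁ f₂ hf₂ horb
  refine ⟨ε / 2, by linarith, ε / 2, by linarith, fun h hh a ha => ?_⟩
  have hcomp : dist (h.comp (gA a ha)) (f₁.comp (gA a ha)) ≤ dist h f₁ := by
    rw [ContinuousMap.dist_le dist_nonneg]
    intro x
    exact ContinuousMap.dist_apply_le_dist (f := h) (g := f₁) _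
  have htri : dist (f₁.comp (gA a ha)) f₂ ≤
      dist (f₁.comp (gA a ha)) (h.comp (gA a ha)) + dist (h.comp (gA a ha)) f₂ :=
    dist_triangle _ _ _
  have := hkey a ha
  rw [dist_comm] at hcomp
  linarith
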